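/- Let $k$ be a field, and let $\tilde{k}_0$ be the multiplicative group of nonzero rational functions over $k$ expressible as $f/g$ where $f, g \in k[t]$ are polynomials with constant coefficients $f(0) = g(0) = 1$. Then $\tilde{k}_0$ is isomorphic as an abelian group to the direct sum $\bigoplus_{M} \mathbb{Z}$, where $M$ ranges over the maximal ideals of $k[t]$ other than the ideal $(t)$ generated by $t$. -/

import Mathlib

open Polynomial

/-- The subgroup `k̃₀` of the units of `RatFunc k` consisting of rational functions
expressible as `f / g` with `f, g` polynomials having constant coefficient `1`. -/
def ktilde (k : Type*) [Field k] : Subgroup (RatFunc k)ˣ where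
  carrier := {u | ∃ f g : Polynomial k, f.coeff 0 = 1 ∧ g.coeff 0 = 1 ∧
    (u : RatFunc k) = algebraMap (Polynomial k) (RatFunc k) f /
      algebraMap (Polynomial k) (RatFunc k) g}
  one_mem' := ⟨1, 1, by simp, by simp, by simp⟩
  mul_mem' := by
    rintro u v ⟨f₁, g₁, hf₁, hg₁, h₁⟩ ⟨f₂, g₂, hf₂, hg₂, h₂⟩
    refine ⟨f₁ * f₂, g₁ * g₂, by simp [Polynomial.mul_coeff_zero, hf₁, hf₂],
      by simp [Polynomial.mul_coeff_zero, hg₁, hg₂], ?_⟩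
    rw [Units.val_mul, h₁, h₂, map_mul, map_mul, div_mul_div_comm]
  inv_mem' := by
    rintro u ⟨f, g, hf, hg, h⟩
    refine ⟨g, f, hg, hf, ?_⟩
    rw [Units.val_inv_eq_inv_val, h, inv_div]

namespace KtildeAux

variable {k : Type*} [Field k]

/-- The index type: maximal ideals of `k[t]` other than `(t)`. -/
abbrev MaxSpec (k : Type*) [Field k] :=
  {M : Ideal (Polynomial k) // M.IsMaximal ∧ M ≠ Ideal.span {(Polynomial.X : Polynomial k)}}

lemma assoc_eq {p q : Polynomial k} (h : Associated p q) (hp : p.coeff 0 = 1)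
    (hq : q.coeff 0 = 1) : p = q := by
  obtain ⟨u, hu⟩ := h
  obtain ⟨r, hr, hC⟩ := Polynomial.isUnit_iff.mp u.isUnit
  have h0 : q.coeff 0 = p.coeff 0 * r := by
    rw [← hu, ← hC, Polynomial.coeff_mul_C]
  rw [hp, hq, one_mul] at h0
  rw [← hu, ← hC, ← h0, Polynomial.C_1, mul_one]

lemma exists_gen (M : MaxSpec k) :
    ∃ p : Polynomial k, Irreducible p ∧ p.coeff 0 = 1 ∧ Ideal.span {p} = M.1 := by
  obtain ⟨M, hM, hMX⟩ := M
  obtain ⟨q, hq⟩ : ∃ a, M = Ideal.span {a} := (IsPrincipalIdealRing.principal M).principal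
  have hXne : Ideal.span {(Polynomial.X : Polynomial k)} ≠ ⊤ :=
    Ideal.span_singleton_ne_top Polynomial.not_isUnit_X
  have hq0 : q ≠ 0 := by
    rintro rfl
    simp only [Set.singleton_zero, Ideal.span_zero] at hq
    subst hq
    exact hMX (hM.eq_of_le hXne bot_le)
  have hqprime : Prime q := by
    rw [← Ideal.span_singleton_prime hq0, ← hq]
    exact hM.isPrime
  have hqc0 : q.coeff 0 ≠ 0 := by
    intro h
    obtain ⟨c, hc⟩ := Polynomial.X_dvd_iff.mpr h
    rcases hqprime.irreducible.isUnit_or_isUnit hc with h' | h'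
    · exact Polynomial.not_isUnit_X h'
    · refine hMX ?_
      rw [hq, Ideal.span_singleton_eq_span_singleton]
      exact Associated.symm ⟨h'.unit, by rw [IsUnit.unit_spec]; exact hc.symm⟩
  refine ⟨(q.coeff 0)⁻¹ • q, ?_, ?_, ?_⟩
  · have : Associated q ((q.coeff 0)⁻¹ • q) := by
      refine ⟨((Polynomial.isUnit_C).mpr (inv_ne_zero hqc0).isUnit).unit, ?_⟩
      rw [IsUnit.unit_spec, Polynomial.smul_eq_C_mul, mul_comm]
    exact this.irreducible hqprime.irreducible
  · rw [Polynomial.coeff_smul, smul_eq_mul, inv_mul_cancel₀ hqc0]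
  · show Ideal.span {(q.coeff 0)⁻¹ • q} = M
    rw [hq, Ideal.span_singleton_eq_span_singleton]
    exact Associated.symm ⟨((Polynomial.isUnit_C).mpr (inv_ne_zero hqc0).isUnit).unit, by
      rw [IsUnit.unit_spec, Polynomial.smul_eq_C_mul, mul_comm]⟩

/-- The normalized (constant coefficient `1`) irreducible generator of `M`. -/
noncomputable def pgen (M : MaxSpec k) : Polynomial k := (exists_gen M).choose

lemma pgen_irreducible (M : MaxSpec k) : Irreducible (pgen M) := (exists_gen M).choose_spec.1

lemma pgen_coeff (M : MaxSpec k) : (pgen M).coeff 0 = 1 := (exists_gen M).choose_spec.2.1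

lemma pgen_span (M : MaxSpec k) : Ideal.span {pgen M} = M.1 := (exists_gen M).choose_spec.2.2

lemma pgen_ne_zero (M : MaxSpec k) : pgen M ≠ 0 := (pgen_irreducible M).ne_zero

lemma pgen_unique {p : Polynomial k} {M : MaxSpec k} (hp : p.coeff 0 = 1)
    (hs : Ideal.span {p} = M.1) : pgen M = p :=
  assoc_eq (Ideal.span_singleton_eq_span_singleton.mp ((pgen_span M).trans hs.symm))
    (pgen_coeff M) hp

/-- The unit of `RatFunc k` given by `pgen M`. -/
noncomputable def toUnit (M : MaxSpec k) : (RatFunc k)ˣ :=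
  Units.mk0 (algebraMap (Polynomial k) (RatFunc k) (pgen M))
    (RatFunc.algebraMap_ne_zero (pgen_ne_zero M))

lemma toUnit_val (M : MaxSpec k) :
    (toUnit M : RatFunc k) = algebraMap (Polynomial k) (RatFunc k) (pgen M) := rfl

lemma toUnit_mem (M : MaxSpec k) : toUnit M ∈ ktilde k :=
  ⟨pgen M, 1, pgen_coeff M, by simp, by simp [toUnit_val]⟩

/-- The homomorphism from the free abelian group to the units of `RatFunc k`. -/
noncomputable def psi : Multiplicative (MaxSpec k →₀ ℤ) →* (RatFunc k)ˣ :=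
  AddMonoidHom.toMultiplicativeLeft
    (Finsupp.liftAddHom fun M => zmultiplesHom (Additive (RatFunc k)ˣ) (Additive.ofMul (toUnit M)))

lemma psi_apply (d : MaxSpec k →₀ ℤ) :
    psi (Multiplicative.ofAdd d) = d.prod fun M n => toUnit M ^ n := by
  change Additive.toMul (Finsupp.liftAddHom
    (fun M => zmultiplesHom (Additive (RatFunc k)ˣ) (Additive.ofMul (toUnit M))) d) = _
  rw [Finsupp.liftAddHom_apply]
  simp only [Finsupp.sum, Finsupp.prod, zmultiplesHom_apply]
  rw [toMul_sum]
  simp [toMul_zsmul]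

lemma psi_single (M : MaxSpec k) (n : ℤ) :
    psi (Multiplicative.ofAdd (Finsupp.single M n)) = toUnit M ^ n := by
  rw [psi_apply, Finsupp.prod_single_index (by simp)]

/-- `M` as a height-one prime of `k[t]`. -/
noncomputable def hos (M : MaxSpec k) : IsDedekindDomain.HeightOneSpectrum (Polynomial k) where
  asIdeal := M.1
  isPrime := M.2.1.isPrime
  ne_bot := by
    intro h
    have hXne : Ideal.span {(Polynomial.X : Polynomial k)} ≠ ⊤ :=
      Ideal.span_singleton_ne_top Polynomial.not_isUnit_X
    exact M.2.2 (M.2.1.eq_of_le hXne (h ▸ bot_le))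

open scoped Multiplicative Classical in
open IsDedekindDomain.HeightOneSpectrum in
lemma val_pgen (M M' : MaxSpec k) :
    (hos M).valuation (RatFunc k) ((algebraMap (Polynomial k) (RatFunc k)) (pgen M')) =
      if M' = M then ((Multiplicative.ofAdd (-1 : ℤ) : Multiplicative ℤ) : (WithZero (Multiplicative ℤ))) else 1 := by
  rw [valuation_of_algebraMap]
  split_ifs with h
  · subst h
    exact intValuation_singleton _ (pgen_ne_zero M') (pgen_span M').symm
  · have hle := (hos M).intValuation_le_one (pgen M')
    have hnlt : ¬ (hos M).intValuationDef (pgen M') < 1 := by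
      rw [← intValuation_apply, intValuation_lt_one_iff_dvd, Ideal.dvd_iff_le, pgen_span]
      intro hle'
      exact h (Subtype.ext (M'.2.1.eq_of_le M.2.1.ne_top hle'))
    rw [intValuation_apply]
    exact le_antisymm hle (not_lt.mp hnlt)

open scoped Multiplicative Classical in
open IsDedekindDomain.HeightOneSpectrum in
lemma psi_injective : Function.Injective (psi (k := k)) := by
  intro x y hxy
  rw [← div_eq_one, ← _root_.map_div] at hxy
  suffices h : x / y = 1 by rwa [div_eq_one] at h
  set d : MaxSpec k →₀ ℤ := Multiplicative.toAdd (x / y) with hd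
  have key : ∀ M : MaxSpec k, d M = 0 := by
    intro M
    have h1 : ((psi (x / y) : (RatFunc k)ˣ) : RatFunc k) = 1 := by rw [hxy, Units.val_one]
    have h2 : (hos M).valuation (RatFunc k) ((psi (Multiplicative.ofAdd d) : (RatFunc k)ˣ) : RatFunc k) =
        ((Multiplicative.ofAdd (-(d M)) : Multiplicative ℤ) : (WithZero (Multiplicative ℤ))) := by
      rw [psi_apply]
      have hval : ((d.prod fun M' n => toUnit M' ^ n : (RatFunc k)ˣ) : RatFunc k) =
          d.prod fun M' n => (algebraMap (Polynomial k) (RatFunc k) (pgen M')) ^ n := by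
        rw [← Units.coeHom_apply, Finsupp.prod, Finsupp.prod, map_prod]
        exact Finset.prod_congr rfl fun a _ => by
          rw [Units.coeHom_apply, Units.val_zpow_eq_zpow_val, toUnit_val]
      rw [hval, Finsupp.prod, map_prod]
      have : ∀ M' ∈ d.support,
          (hos M).valuation (RatFunc k) ((algebraMap (Polynomial k) (RatFunc k) (pgen M')) ^ (d M')) =
          (if M' = M then ((Multiplicative.ofAdd (-1 : ℤ) : Multiplicative ℤ) : (WithZero (Multiplicative ℤ))) else 1)
            ^ (d M') := by
        intro M' _
        rw [map_zpow₀, val_pgen]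
      rw [Finset.prod_congr rfl this, ← Finsupp.prod, Finsupp.prod_eq_single M
        (fun b _ hb => by rw [if_neg hb, one_zpow]) (fun _ => by simp)]
      rw [if_pos rfl, ← WithZero.coe_zpow, WithZero.coe_inj]
      rw [← ofAdd_zsmul]
      norm_num
    rw [ofAdd_toAdd, h1, map_one] at h2
    have := WithZero.coe_inj.mp (h2.symm.trans (by norm_cast))
    simpa using (Multiplicative.ofAdd.injective this).symm
  have : d = 0 := Finsupp.ext key
  rw [hd] at this
  exact Multiplicative.toAdd.injective (by simpa using this)

lemma toUnit_mem_range (M : MaxSpec k) : toUnit M ∈ (psi (k := k)).range :=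
  ⟨Multiplicative.ofAdd (Finsupp.single M 1), by rw [psi_single, zpow_one]⟩

lemma mem_range_of_coeff_ne_zero (f : Polynomial k) (hf : f.coeff 0 ≠ 0) :
    ∃ u ∈ (psi (k := k)).range,
      (u : RatFunc k) = algebraMap (Polynomial k) (RatFunc k) ((f.coeff 0)⁻¹ • f) := by
  induction f using UniqueFactorizationMonoid.induction_on_prime with
  | h₁ => simp at hf
  | h₂ x hx =>
    obtain ⟨r, hr, hC⟩ := Polynomial.isUnit_iff.mp hx
    refine ⟨1, one_mem _, ?_⟩
    have hr0 : r ≠ 0 := hr.ne_zero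
    have : (x.coeff 0)⁻¹ • x = 1 := by
      rw [← hC, Polynomial.coeff_C, if_pos rfl, Polynomial.smul_eq_C_mul, ← Polynomial.C_mul,
        inv_mul_cancel₀ hr0, Polynomial.C_1]
    rw [this, map_one, Units.val_one]
  | h₃ a p ha hp ih =>
    rw [Polynomial.mul_coeff_zero] at hf ⊢
    have hp0 : p.coeff 0 ≠ 0 := fun h => hf (by rw [h, zero_mul])
    have ha0 : a.coeff 0 ≠ 0 := fun h => hf (by rw [h, mul_zero])
    set p' : Polynomial k := (p.coeff 0)⁻¹ • p with hp'
    have hassoc : Associated p p' := by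
      refine ⟨((Polynomial.isUnit_C).mpr (inv_ne_zero hp0).isUnit).unit, ?_⟩
      rw [IsUnit.unit_spec, hp', Polynomial.smul_eq_C_mul, mul_comm]
    have hp'irr : Irreducible p' := hassoc.irreducible hp.irreducible
    have hp'c : p'.coeff 0 = 1 := by
      rw [hp', Polynomial.coeff_smul, smul_eq_mul, inv_mul_cancel₀ hp0]
    have hmax : (Ideal.span {p'}).IsMaximal :=
      PrincipalIdealRing.isMaximal_of_irreducible hp'irr
    have hne : Ideal.span {p'} ≠ Ideal.span {(Polynomial.X : Polynomial k)} := by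
      intro h
      have := Ideal.span_singleton_eq_span_singleton.mp h
      obtain ⟨u, hu⟩ := this
      obtain ⟨r, hr, hC⟩ := Polynomial.isUnit_iff.mp u.isUnit
      have : (Polynomial.X : Polynomial k).coeff 0 = p'.coeff 0 * r := by
        rw [← hu, ← hC, Polynomial.coeff_mul_C]
      rw [Polynomial.coeff_X_zero, hp'c, one_mul] at this
      exact hr.ne_zero this.symm
    set M : MaxSpec k := ⟨Ideal.span {p'}, hmax, hne⟩ with hM
    have hpg : pgen M = p' := pgen_unique hp'c rfl
    obtain ⟨ua, hua_mem, hua⟩ := ih ha0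
    refine ⟨toUnit M * ua, mul_mem (toUnit_mem_range M) hua_mem, ?_⟩
    rw [Units.val_mul, toUnit_val, hpg, hua, ← map_mul]
    congr 1
    rw [hp', mul_inv, smul_mul_smul_comm]

lemma range_psi : (psi (k := k)).range = ktilde k := by
  apply le_antisymm
  · rintro u ⟨x, rfl⟩
    have : x = Multiplicative.ofAdd (Multiplicative.toAdd x) := rfl
    rw [this, psi_apply]
    exact Subgroup.prod_mem _ fun M _ => zpow_mem (toUnit_mem M) _
  · rintro u ⟨f, g, hf, hg, h⟩
    obtain ⟨uf, huf_mem, huf⟩ := mem_range_of_coeff_ne_zero f (by rw [hf]; exact one_ne_zero)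
    obtain ⟨ug, hug_mem, hug⟩ := mem_range_of_coeff_ne_zero g (by rw [hg]; exact one_ne_zero)
    rw [hf, inv_one, one_smul] at huf
    rw [hg, inv_one, one_smul] at hug
    have : u = uf * ug⁻¹ := by
      apply Units.ext
      rw [Units.val_mul, Units.val_inv_eq_inv_val, huf, hug, h, div_eq_mul_inv]
    rw [this]
    exact mul_mem huf_mem (inv_mem hug_mem)

end KtildeAux

theorem stmt_9 (k : Type*) [Field k] :
    Nonempty (ktilde k ≃*
      Multiplicative ({M : Ideal (Polynomial k) // M.IsMaximal ∧
        M ≠ Ideal.span {(Polynomial.X : Polynomial k)}} →₀ ℤ)) := by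
  exact ⟨((MonoidHom.ofInjective KtildeAux.psi_injective).trans
    (MulEquiv.subgroupCongr KtildeAux.range_psi)).symm⟩
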